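/- Let (A_n) be a sequence of von Neumann algebras in B(H). Define limsup A_n as the von Neumann algebra generated by all weak operator limits of subsequences T_{n_k} ∈ A_{n_k}, and liminf A_n' as the von Neumann algebra generated by all T ∈ B(H) such that there exist T_n ∈ A_n' with T_n → T and T_n* → T* strongly. Then limsup A_n ⊆ (liminf A_n')'. -/

import Mathlib

open Filter

/-- A sequence of operators that converges weakly (pointwise in the weak operator topology)
is uniformly bounded, by two applications of Banach–Steinhaus. -/
lemma weak_limit_bdd {H : Type*} [NormedAddCommGroup H] [InnerProductSpace ℂ H]
    [CompleteSpace H] {S' : ℕ → H →L[ℂ] H} {S : H →L[ℂ] H}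
    (h : ∀ ξ η : H, Tendsto (fun k => (inner ℂ (S' k ξ) η : ℂ)) atTop (nhds (inner ℂ (S ξ) η))) :
    ∃ M, ∀ k, ‖S' k‖ ≤ M := by
  apply banach_steinhaus
  intro ξ
  have h2 : ∃ C, ∀ k, ‖innerSL ℂ (S' k ξ)‖ ≤ C := by
    apply banach_steinhaus
    intro η
    obtain ⟨C, hC⟩ := ((h ξ η).norm).bddAbove_range
    refine ⟨C, fun k => ?_⟩
    have := hC (Set.mem_range_self k)
    simpa [norm_inner_symm (S' k ξ) η] using this
  obtain ⟨C, hC⟩ := h2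
  exact ⟨C, fun k => by simpa [innerSL_apply_norm] using hC k⟩

/-- For a sequence `(A n)` of von Neumann algebras on `H`, the von Neumann algebra
`limsup A n` generated by all weak-operator limits of subsequences `T k ∈ A (φ k)`
(i.e. the double commutant of the set of such limits) is contained in the commutant of
`liminf A n'`, the von Neumann algebra generated by all `T` which are strong* limits of
sequences `T n ∈ (A n)'` (whose commutant is the commutant of the generating set). -/
theorem stmt9 {H : Type*} [NormedAddCommGroup H] [InnerProductSpace ℂ H] [CompleteSpace H]
    (A : ℕ → VonNeumannAlgebra H) :
    Set.centralizer (Set.centralizer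
      {T : H →L[ℂ] H | ∃ φ : ℕ → ℕ, StrictMono φ ∧ ∃ T' : ℕ → H →L[ℂ] H,
        (∀ k, T' k ∈ A (φ k)) ∧
        ∀ ξ η : H, Tendsto (fun k => (inner ℂ (T' k ξ) η : ℂ)) atTop (nhds (inner ℂ (T ξ) η))})
      ⊆ Set.centralizer
      {T : H →L[ℂ] H | ∃ T' : ℕ → H →L[ℂ] H,
        (∀ n, T' n ∈ (A n).commutant) ∧
        (∀ ξ : H, Tendsto (fun n => T' n ξ) atTop (nhds (T ξ))) ∧
        (∀ ξ : H, Tendsto (fun n => ContinuousLinearMap.adjoint (T' n) ξ) atTop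
          (nhds (ContinuousLinearMap.adjoint T ξ)))} := by
  apply Set.centralizer_subset
  rintro T ⟨T', hT'mem, hT's, hT'adj⟩ S ⟨φ, hφ, S', hS'mem, hS'w⟩
  -- uniform bound on the `S' k`
  obtain ⟨M, hM⟩ := weak_limit_bdd hS'w
  have hM0 : ∀ k, (0:ℝ) ≤ ‖S' k‖ := fun k => norm_nonneg _
  -- the key commutation on each level: `S' k * T' (φ k) = T' (φ k) * S' k`
  have hcomm : ∀ k, S' k * T' (φ k) = T' (φ k) * S' k := fun k =>
    (VonNeumannAlgebra.mem_commutant_iff.mp (hT'mem (φ k))) (S' k) (hS'mem k)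
  have key : S * T = T * S := by
    ext ξ
    apply ext_inner_right ℂ
    intro η
    have hA : Tendsto (fun k => (inner ℂ (S' k (T ξ)) η : ℂ)) atTop
        (nhds (inner ℂ (S (T ξ)) η)) := hS'w (T ξ) η
    have hB : Tendsto (fun k => (inner ℂ (S' k (T ξ)) η : ℂ)) atTop
        (nhds (inner ℂ (T (S ξ)) η)) := by
      -- main term: `⟪S' k ξ, T* η⟫ → ⟪S ξ, T* η⟫ = ⟪T (S ξ), η⟫`
      have hb : Tendsto (fun k => (inner ℂ (T (S' k ξ)) η : ℂ)) atTop
          (nhds (inner ℂ (T (S ξ)) η)) := by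
        have := hS'w ξ ((ContinuousLinearMap.adjoint T) η)
        simpa only [ContinuousLinearMap.adjoint_inner_right] using this
      -- error term tends to zero
      have hdiff : Tendsto (fun k => (inner ℂ (S' k (T ξ)) η : ℂ) - inner ℂ (T (S' k ξ)) η)
          atTop (nhds 0) := by
        have hrw : ∀ k, (inner ℂ (S' k (T ξ)) η : ℂ) - inner ℂ (T (S' k ξ)) η
            = inner ℂ (S' k (T ξ - T' (φ k) ξ)) η
              + (inner ℂ (S' k ξ) ((ContinuousLinearMap.adjoint (T' (φ k))) η
                  - (ContinuousLinearMap.adjoint T) η) : ℂ) := by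
          intro k
          have h1 : (inner ℂ (S' k (T' (φ k) ξ)) η : ℂ) = inner ℂ (T' (φ k) (S' k ξ)) η := by
            have := congrArg (fun W : H →L[ℂ] H => (inner ℂ (W ξ) η : ℂ)) (hcomm k)
            simpa [ContinuousLinearMap.mul_apply] using this
          have h2 : (inner ℂ (T' (φ k) (S' k ξ)) η : ℂ)
              = inner ℂ (S' k ξ) ((ContinuousLinearMap.adjoint (T' (φ k))) η) := by
            rw [ContinuousLinearMap.adjoint_inner_right]
          have h3 : (inner ℂ (T (S' k ξ)) η : ℂ)
              = inner ℂ (S' k ξ) ((ContinuousLinearMap.adjoint T) η) := by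
            rw [ContinuousLinearMap.adjoint_inner_right]
          simp only [map_sub, inner_sub_left, inner_sub_right, h3]
          rw [← h2, ← h1]
          ring
        have hbound : ∀ k, ‖(inner ℂ (S' k (T ξ)) η : ℂ) - inner ℂ (T (S' k ξ)) η‖
            ≤ M * ‖T ξ - T' (φ k) ξ‖ * ‖η‖
              + M * ‖ξ‖ * ‖(ContinuousLinearMap.adjoint (T' (φ k))) η
                  - (ContinuousLinearMap.adjoint T) η‖ := by
          intro k
          rw [hrw k]
          refine (norm_add_le _ _).trans (add_le_add ?_ ?_)
          · calc ‖(inner ℂ (S' k (T ξ - T' (φ k) ξ)) η : ℂ)‖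
                ≤ ‖S' k (T ξ - T' (φ k) ξ)‖ * ‖η‖ := norm_inner_le_norm _ _
              _ ≤ (‖S' k‖ * ‖T ξ - T' (φ k) ξ‖) * ‖η‖ := by
                  gcongr; exact (S' k).le_opNorm _
              _ ≤ M * ‖T ξ - T' (φ k) ξ‖ * ‖η‖ := by gcongr; exact hM k
          · calc ‖(inner ℂ (S' k ξ) ((ContinuousLinearMap.adjoint (T' (φ k))) η
                  - (ContinuousLinearMap.adjoint T) η) : ℂ)‖
                ≤ ‖S' k ξ‖ * ‖(ContinuousLinearMap.adjoint (T' (φ k))) η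
                  - (ContinuousLinearMap.adjoint T) η‖ := norm_inner_le_norm _ _
              _ ≤ (‖S' k‖ * ‖ξ‖) * ‖(ContinuousLinearMap.adjoint (T' (φ k))) η
                  - (ContinuousLinearMap.adjoint T) η‖ := by
                  gcongr; exact (S' k).le_opNorm _
              _ ≤ M * ‖ξ‖ * ‖(ContinuousLinearMap.adjoint (T' (φ k))) η
                  - (ContinuousLinearMap.adjoint T) η‖ := by gcongr; exact hM k
        have hz1 : Tendsto (fun k => ‖T ξ - T' (φ k) ξ‖) atTop (nhds 0) := by
          have := ((hT's ξ).comp (hφ.tendsto_atTop)).const_sub (T ξ)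
          simpa using this.norm
        have hz2 : Tendsto (fun k => ‖(ContinuousLinearMap.adjoint (T' (φ k))) η
            - (ContinuousLinearMap.adjoint T) η‖) atTop (nhds 0) := by
          have := ((hT'adj η).comp (hφ.tendsto_atTop)).sub_const
            ((ContinuousLinearMap.adjoint T) η)
          simpa using this.norm
        have hzz : Tendsto (fun k => M * ‖T ξ - T' (φ k) ξ‖ * ‖η‖
            + M * ‖ξ‖ * ‖(ContinuousLinearMap.adjoint (T' (φ k))) η
                - (ContinuousLinearMap.adjoint T) η‖) atTop (nhds 0) := by
          have h1 : Tendsto (fun k => M * ‖T ξ - T' (φ k) ξ‖ * ‖η‖) atTop (nhds 0) := by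
            have := (hz1.const_mul M).mul_const ‖η‖
            simpa using this
          have h2 : Tendsto (fun k => M * ‖ξ‖ * ‖(ContinuousLinearMap.adjoint (T' (φ k))) η
              - (ContinuousLinearMap.adjoint T) η‖) atTop (nhds 0) := by
            have := hz2.const_mul (M * ‖ξ‖)
            simpa using this
          simpa using h1.add h2
        exact squeeze_zero_norm hbound hzz
      have := hdiff.add hb
      simpa using this
    exact tendsto_nhds_unique hA hB
  simpa [ContinuousLinearMap.mul_apply] using key
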